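/- Let A₁, A₂, A₃ ∈ ℝ² be affinely independent, let T = conv{A₁,A₂,A₃} with each of its three interior angles at most π/2, let D be a point in the relative interior of the edge e₁ = [A₂,A₃] and E a point in the relative interior of the edge e₂ = [A₁,A₃], let K = conv{E,D,A₃}, and let t be a unit vector parallel to D − E. Then 0 ≤ ⟨(Πω)(x), t⟩ ≤ 1 for every x ∈ T, where ω is the piecewise field equal to t on K and 0 on T∖K and Πω is its Raviart–Thomas interpolant. -/

import Mathlib

open Real MeasureTheory RealInnerProductSpace

noncomputable section

abbrev V2 : Type := EuclideanSpace ℝ (Fin 2)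

/-- Area of the triangle `conv{A₁, A₂, A₃}`. -/
def triArea (A₁ A₂ A₃ : V2) : ℝ :=
  (volume (convexHull ℝ ({A₁, A₂, A₃} : Set V2))).toReal

/-- Standard lowest-order Raviart–Thomas basis function associated with the edge
opposite `A₁`: `λ₁(x) = (|e₁|/(2|T|))(x - A₁)`. -/
def lam1 (A₁ A₂ A₃ : V2) : V2 → V2 := fun x =>
  (‖A₃ - A₂‖ / (2 * triArea A₁ A₂ A₃)) • (x - A₁)

/-- `λ₂(x) = (|e₂|/(2|T|))(x - A₂)`. -/
def lam2 (A₁ A₂ A₃ : V2) : V2 → V2 := fun x =>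
  (‖A₃ - A₁‖ / (2 * triArea A₁ A₂ A₃)) • (x - A₂)

/-- The Raviart–Thomas interpolant `Πω = Σᵢ Nᵢ(ω) λᵢ` of the piecewise field `ω` equal to
`t` on `K = conv{E, D, A₃}` and `0` on `T∖K`, where `N₁(ω) = (|DA₃|/|e₁|)⟨t, n₁⟩`,
`N₂(ω) = (|EA₃|/|e₂|)⟨t, n₂⟩` and `N₃(ω) = 0`. -/
def piOmega (A₁ A₂ A₃ D E t n₁ n₂ : V2) : V2 → V2 := fun x =>
  ((‖A₃ - D‖ / ‖A₃ - A₂‖) * ⟪t, n₁⟫) • lam1 A₁ A₂ A₃ x +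
    ((‖A₃ - E‖ / ‖A₃ - A₁‖) * ⟪t, n₂⟫) • lam2 A₁ A₂ A₃ x

namespace Stmt3Aux

lemma inner2 (u v : V2) : ⟪u, v⟫ = u 0 * v 0 + u 1 * v 1 := by
  simp [PiLp.inner_apply, Fin.sum_univ_two, RCLike.inner_apply]; ring

lemma norm2 (u : V2) : ‖u‖^2 = u 0^2 + u 1^2 := by
  rw [← real_inner_self_eq_norm_sq, inner2]; ring

lemma perp_key (n w p : V2) (h : ⟪n, w⟫ = 0) (hn : ‖n‖ = 1) :
    ⟪p, n⟫^2 * ‖w‖^2 = (p 0 * w 1 - p 1 * w 0)^2 := by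
  have hn2 : n 0^2 + n 1^2 = 1 := by rw [← norm2, hn]; norm_num
  rw [inner2, norm2] at *
  linear_combination ((p 0*n 0+p 1*n 1)*(p 0*w 0+p 1*w 1) +
    (p 0*w 1-p 1*w 0)*(p 1*n 0-p 0*n 1)) * h + (p 0*w 1-p 1*w 0)^2 * hn2

lemma core_ineq (a b cc d e : ℝ) (hb0 : 0 ≤ b) (hba : b ≤ a) (hbc : b ≤ cc)
    (hd0 : 0 < d) (_hd1 : d < 1) (he0 : 0 < e) (_he1 : e < 1) :
    (1-d)*(1-e)*((1-d)*a+(d-e)*b) ≤ (1-d)^2*a+2*(1-d)*(d-e)*b+(d-e)^2*cc := by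
  nlinarith [mul_nonneg (mul_nonneg (sq_nonneg (1-d)) he0.le) (sub_nonneg.2 hba),
    mul_nonneg (sq_nonneg (d-e)) (sub_nonneg.2 hbc),
    mul_nonneg (mul_nonneg hb0 hd0.le) (sq_nonneg (1-e))]

lemma angle_inner (A B C : V2) (h : EuclideanGeometry.angle B A C ≤ π/2) :
    0 ≤ ⟪B - A, C - A⟫ := by
  have h0 := InnerProductGeometry.cos_angle_mul_norm_mul_norm (B - A) (C - A)
  rw [← h0]
  have := InnerProductGeometry.angle_nonneg (B - A) (C - A)
  have hc : 0 ≤ Real.cos (InnerProductGeometry.angle (B - A) (C - A)) := by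
    apply Real.cos_nonneg_of_mem_Icc
    constructor <;> [linarith [pi_pos]; skip]
    rwa [EuclideanGeometry.angle, vsub_eq_sub, vsub_eq_sub] at h
  positivity

lemma region_half : (volume : Measure (ℝ × ℝ))
    (regionBetween (fun _ => 0) (fun x => 1 - x) (Set.Ioo 0 1)) = ENNReal.ofReal (1/2) := by
  rw [Measure.volume_eq_prod]
  rw [volume_regionBetween_eq_integral]
  · simp only [Pi.sub_apply]
    rw [← MeasureTheory.integral_Ioc_eq_integral_Ioo,
      ← intervalIntegral.integral_of_le (by norm_num : (0:ℝ) ≤ 1)]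
    have : (∫ x in (0:ℝ)..1, (1 - x - 0)) = ∫ x in (0:ℝ)..1, ((1:ℝ) - x) := by norm_num
    rw [this, intervalIntegral.integral_sub intervalIntegrable_const
      intervalIntegral.intervalIntegrable_id]
    simp; norm_num
    rw [ENNReal.ofReal_div_of_pos (by norm_num)]; simp
  · exact integrableOn_const (by simp)
  · exact ((continuous_const.sub continuous_id).integrableOn_Icc).mono_set Set.Ioo_subset_Icc_self
  · exact measurableSet_Ioo
  · intro x hx; simp only [Set.mem_Ioo] at hx; linarith [hx.2]

lemma std_tri_lb :
    ENNReal.ofReal (1/2) ≤ volume (convexHull ℝ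
      ({0, EuclideanSpace.single 0 1, EuclideanSpace.single 1 1} : Set V2)) := by
  classical
  set F : V2 ≃ᵐ ℝ × ℝ := (MeasurableEquiv.toLp 2 (Fin 2 → ℝ)).symm.trans
    (MeasurableEquiv.finTwoArrow)
  have hF : MeasurePreserving F volume volume :=
    (volume_preserving_finTwoArrow ℝ).comp (EuclideanSpace.volume_preserving_symm_measurableEquiv_toLp (Fin 2))
  have hR : MeasurableSet (regionBetween (fun _ => (0:ℝ)) (fun x => 1 - x) (Set.Ioo 0 1)) :=
    measurableSet_regionBetween measurable_const (by fun_prop) measurableSet_Ioo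
  have hsub : F ⁻¹' (regionBetween (fun _ => 0) (fun x => 1 - x) (Set.Ioo 0 1)) ⊆
      convexHull ℝ ({0, EuclideanSpace.single 0 1, EuclideanSpace.single 1 1} : Set V2) := by
    rintro v hv
    simp only [Set.mem_preimage, regionBetween, Set.mem_setOf_eq, Set.mem_Ioo] at hv
    have hFv : F v = (v 0, v 1) := rfl
    rw [hFv] at hv
    obtain ⟨⟨h01, h02⟩, h11, h12⟩ := hv
    simp only at h01 h02 h11 h12
    set z : Fin 3 → V2 := ![0, EuclideanSpace.single 0 1, EuclideanSpace.single 1 1] with hz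
    set w : Fin 3 → ℝ := ![1 - v 0 - v 1, v 0, v 1] with hw
    have hmem := Finset.centerMass_mem_convexHull (t := (Finset.univ : Finset (Fin 3))) (w := w)
      (z := z) (s := ({0, EuclideanSpace.single 0 1, EuclideanSpace.single 1 1} : Set V2))
      (by intro i _; fin_cases i <;> simp [hw] <;> linarith)
      (by simp [hw, Fin.sum_univ_three]; linarith)
      (by intro i _; fin_cases i <;> simp [hz])
    convert hmem using 1
    rw [Finset.centerMass]
    have hsum : (∑ i, w i) = 1 := by simp [hw, Fin.sum_univ_three]; ring
    rw [hsum]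
    simp only [inv_one, one_smul, Fin.sum_univ_three]
    ext i
    fin_cases i <;>
      simp [hw, hz, EuclideanSpace.single_apply, PiLp.add_apply, PiLp.smul_apply, smul_eq_mul]
  calc ENNReal.ofReal (1/2)
      = volume (F ⁻¹' (regionBetween (fun _ => 0) (fun x => 1 - x) (Set.Ioo 0 1))) := by
        rw [hF.measure_preimage hR.nullMeasurableSet, region_half]
    _ ≤ _ := measure_mono hsub

def Lmap (p q : V2) : V2 →ₗ[ℝ] V2 where
  toFun v := v 0 • p + v 1 • q
  map_add' u v := by simp only [PiLp.add_apply]; module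
  map_smul' r v := by
    simp only [PiLp.smul_apply, smul_eq_mul, RingHom.id_apply]; module

lemma Lmap_det (p q : V2) : LinearMap.det (Lmap p q) = p 0 * q 1 - p 1 * q 0 := by
  classical
  let b := (EuclideanSpace.basisFun (Fin 2) ℝ).toBasis
  rw [← LinearMap.det_toMatrix b]
  have : LinearMap.toMatrix b b (Lmap p q) = !![p 0, q 0; p 1, q 1] := by
    ext i j
    rw [LinearMap.toMatrix_apply]
    have hrefl : ∀ x : V2, (LinearIsometryEquiv.refl ℝ V2).symm x = x := fun x => rfl
    fin_cases i <;> fin_cases j <;>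
      simp [Lmap, b, EuclideanSpace.basisFun, EuclideanSpace.single_apply, hrefl]
  rw [this, Matrix.det_fin_two_of]
  ring

lemma hull_image (A₁ A₂ A₃ : V2) :
    convexHull ℝ ({A₁, A₂, A₃} : Set V2) =
      (fun v => A₁ + Lmap (A₂ - A₁) (A₃ - A₁) v) ''
        convexHull ℝ ({0, EuclideanSpace.single 0 1, EuclideanSpace.single 1 1} : Set V2) := by
  classical
  set L := Lmap (A₂ - A₁) (A₃ - A₁)
  let f : V2 →ᵃ[ℝ] V2 := AffineMap.mk (fun v => A₁ + L v) L
    (by intro p v; simp [vadd_eq_add]; module)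
  have himg : (fun v => A₁ + L v) = ⇑f := rfl
  rw [himg, AffineMap.image_convexHull]
  congr 1
  simp only [Set.image_insert_eq, Set.image_singleton]
  have h0 : f 0 = A₁ := by simp [f, map_zero]
  have h1 : f (EuclideanSpace.single 0 1) = A₂ := by
    show A₁ + L (EuclideanSpace.single 0 1) = A₂
    have : L (EuclideanSpace.single 0 1) = A₂ - A₁ := by
      show (EuclideanSpace.single (0:Fin 2) (1:ℝ)) 0 • (A₂ - A₁) +
        (EuclideanSpace.single (0:Fin 2) (1:ℝ)) 1 • (A₃ - A₁) = A₂ - A₁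
      simp [EuclideanSpace.single_apply]
    rw [this]; abel
  have h2 : f (EuclideanSpace.single 1 1) = A₃ := by
    show A₁ + L (EuclideanSpace.single 1 1) = A₃
    have : L (EuclideanSpace.single 1 1) = A₃ - A₁ := by
      show (EuclideanSpace.single (1:Fin 2) (1:ℝ)) 0 • (A₂ - A₁) +
        (EuclideanSpace.single (1:Fin 2) (1:ℝ)) 1 • (A₃ - A₁) = A₃ - A₁
      simp [EuclideanSpace.single_apply]
    rw [this]; abel
  rw [h0, h1, h2]

lemma area_lb (A₁ A₂ A₃ : V2) :
    |(A₂-A₁) 0 * (A₃-A₁) 1 - (A₂-A₁) 1 * (A₃-A₁) 0| ≤ 2 * triArea A₁ A₂ A₃ := by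
  classical
  set S₀ : Set V2 := convexHull ℝ
    ({0, EuclideanSpace.single 0 1, EuclideanSpace.single 1 1} : Set V2) with hS₀
  set L := Lmap (A₂ - A₁) (A₃ - A₁)
  set Δ := |(A₂-A₁) 0 * (A₃-A₁) 1 - (A₂-A₁) 1 * (A₃-A₁) 0| with hΔ
  have himg : convexHull ℝ ({A₁, A₂, A₃} : Set V2) = (fun v => A₁ + L v) '' S₀ :=
    hull_image A₁ A₂ A₃
  have hvol : volume (convexHull ℝ ({A₁, A₂, A₃} : Set V2)) = ENNReal.ofReal Δ * volume S₀ := by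
    rw [himg]
    have : (fun v => A₁ + L v) '' S₀ = (fun v => A₁ + v) '' (L '' S₀) := by
      rw [Set.image_image]
    rw [this, Set.image_add_left, measure_preimage_add, Measure.addHaar_image_linearMap,
      Lmap_det]
  have hS₀fin : volume S₀ < ⊤ := by
    apply IsCompact.measure_lt_top
    exact (Set.toFinite _).isCompact_convexHull ℝ
  have hS₀lb : ENNReal.ofReal (1/2) ≤ volume S₀ := std_tri_lb
  have h2 : (1:ℝ)/2 ≤ (volume S₀).toReal := by
    rw [← ENNReal.toReal_ofReal (by norm_num : (0:ℝ) ≤ 1/2)]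
    exact ENNReal.toReal_mono hS₀fin.ne hS₀lb
  have : triArea A₁ A₂ A₃ = Δ * (volume S₀).toReal := by
    rw [triArea, hvol, ENNReal.toReal_mul, ENNReal.toReal_ofReal (abs_nonneg _)]
  rw [this]
  nlinarith [abs_nonneg ((A₂-A₁) 0 * (A₃-A₁) 1 - (A₂-A₁) 1 * (A₃-A₁) 0)]


lemma sqrt_step (u v w : ℝ) (h : u^2 = w^2) (hu : 0 < u) (hw : |w| ≤ v) : u ≤ v := by
  have h1 : u ≤ |w| := by nlinarith [abs_nonneg w, sq_abs w]
  linarith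

lemma u_nonneg (a b d e : ℝ) (hb0 : 0 ≤ b) (hba : b ≤ a)
    (hd0 : 0 < d) (hd1 : d < 1) (he0 : 0 < e) (he1 : e < 1) : 0 ≤ (1-d)*a+(d-e)*b := by
  nlinarith [mul_nonneg (by linarith : (0:ℝ) ≤ 1-d) (by linarith : 0 ≤ a - b),
    mul_nonneg (by linarith : (0:ℝ) ≤ 1-e) hb0]

set_option maxHeartbeats 1000000 in
lemma bounds_of (d e L1 L2 P1 P2 T1 T2 X₁ X₂ a b cc τ c det : ℝ)
    (hd0 : 0 < d) (hd1 : d < 1) (he0 : 0 < e) (he1 : e < 1)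
    (hb0 : 0 ≤ b) (hba : b ≤ a) (hbc : b ≤ cc)
    (hL1 : 0 < L1) (hL2 : 0 < L2) (hP1 : 0 < P1) (hP2 : P2 < 0)
    (hk1 : P1^2*L1^2 = det^2) (hk2 : P2^2*L2^2 = det^2)
    (hlb : |det| ≤ 2*τ)
    (hcn1 : c * T1 = (1-e)*P1) (hcn2 : c * T2 = (1-d)*P2)
    (hXc : c * (X₁ - X₂) = (1-d)*a + (d-e)*b)
    (hc2 : c^2 = (1-d)^2*a + 2*(1-d)*(d-e)*b + (d-e)^2*cc)
    (hcne : c ≠ 0) :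
    0 ≤ ((1-d)*T1)*(L1*X₁)/(2*τ) + ((1-e)*T2)*(L2*X₂)/(2*τ) ∧
      ((1-d)*T1)*(L1*X₁)/(2*τ) + ((1-e)*T2)*(L2*X₂)/(2*τ) ≤ 1 := by
  have hΔpos : 0 < L1*P1 := mul_pos hL1 hP1
  have hdet0 : (0:ℝ) ≤ 2*τ := le_trans (abs_nonneg det) hlb
  have harea : L1*P1 ≤ 2*τ :=
    sqrt_step (L1*P1) (2*τ) det (by linear_combination hk1) hΔpos hlb
  have hτ : 0 < τ := by nlinarith
  have hF5 : L1*P1 = -(L2*P2) := by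
    have hfac : (L1*P1 + L2*P2)*(L1*P1 - L2*P2) = 0 := by linear_combination hk1 - hk2
    have h2 : 0 < L1*P1 - L2*P2 := sub_pos.2 (lt_trans (mul_neg_of_pos_of_neg hL2 hP2) hΔpos)
    rcases mul_eq_zero.1 hfac with h | h
    · linarith
    · linarith
  set f := ((1-d)*T1)*(L1*X₁)/(2*τ) + ((1-e)*T2)*(L2*X₂)/(2*τ) with hfdef
  have h2τf : (2*τ)*f = (1-d)*T1*(L1*X₁) + (1-e)*T2*(L2*X₂) := by
    rw [hfdef]; field_simp
  have hfinal : c^2*((2*τ)*f) = (1-d)*(1-e)*(L1*P1)*((1-d)*a+(d-e)*b) := by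
    linear_combination c^2*h2τf + (c*L1*X₁*(1-d))*hcn1 + (c*L2*X₂*(1-e))*hcn2
      + ((1-e)*(1-d)*X₂*c)*hF5 + ((1-d)*(1-e)*(L1*P1))*hXc
  have hden : 0 < c^2*(2*τ) := mul_pos (pow_two_pos_of_ne_zero hcne) (by linarith)
  have hval : f = (1-d)*(1-e)*(L1*P1)*((1-d)*a+(d-e)*b)/(c^2*(2*τ)) := by
    rw [eq_div_iff hden.ne']; linear_combination hfinal
  have hu0 : 0 ≤ (1-d)*a+(d-e)*b := u_nonneg a b d e hb0 hba hd0 hd1 he0 he1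
  constructor
  · rw [hval]
    apply div_nonneg _ hden.le
    exact mul_nonneg (mul_nonneg (mul_nonneg (by linarith : (0:ℝ) ≤ 1-d)
      (by linarith : (0:ℝ) ≤ 1-e)) hΔpos.le) hu0
  · rw [hval, div_le_one hden]
    have hcore := core_ineq a b cc d e hb0 hba hbc hd0 hd1 he0 he1
    rw [← hc2] at hcore
    calc (1-d)*(1-e)*(L1*P1)*((1-d)*a + (d-e)*b)
        = ((1-d)*(1-e)*((1-d)*a + (d-e)*b)) * (L1*P1) := by ring
      _ ≤ c^2 * (2*τ) := mul_le_mul hcore harea hΔpos.le (sq_nonneg c)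

end Stmt3Aux

open Stmt3Aux
set_option maxHeartbeats 1000000

/-- Lemma 4.2 (lem_01) of the paper: `0 ≤ ⟨(Πω)(x), t⟩ ≤ 1` on the triangle, under the
maximum angle condition. -/
theorem stmt3 (A₁ A₂ A₃ D E t n₁ n₂ : V2)
    (hA : AffineIndependent ℝ ![A₁, A₂, A₃])
    (hang1 : EuclideanGeometry.angle A₂ A₁ A₃ ≤ π / 2)
    (hang2 : EuclideanGeometry.angle A₁ A₂ A₃ ≤ π / 2)
    (hang3 : EuclideanGeometry.angle A₁ A₃ A₂ ≤ π / 2)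
    (hD : D ∈ openSegment ℝ A₂ A₃) (hE : E ∈ openSegment ℝ A₁ A₃)
    (ht : ‖t‖ = 1) (htpar : ∃ c : ℝ, D - E = c • t)
    (hn₁ : ‖n₁‖ = 1) (hn₁e : ⟪n₁, A₃ - A₂⟫ = 0) (hn₁o : ⟪n₁, A₁ - A₂⟫ < 0)
    (hn₂ : ‖n₂‖ = 1) (hn₂e : ⟪n₂, A₃ - A₁⟫ = 0) (hn₂o : ⟪n₂, A₂ - A₁⟫ < 0) :
    ∀ x ∈ convexHull ℝ ({A₁, A₂, A₃} : Set V2),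
      0 ≤ ⟪piOmega A₁ A₂ A₃ D E t n₁ n₂ x, t⟫ ∧
        ⟪piOmega A₁ A₂ A₃ D E t n₁ n₂ x, t⟫ ≤ 1 := by
  classical
  have hcomm : ∀ u v : V2, ⟪u, v⟫ = ⟪v, u⟫ := fun u v => real_inner_comm v u
  rw [openSegment_eq_image] at hD hE
  obtain ⟨d, ⟨hd0, hd1⟩, hDdef⟩ := hD
  obtain ⟨e, ⟨he0, he1⟩, hEdef⟩ := hE
  simp only at hDdef hEdef
  have hA32 : A₃ ≠ A₂ := by
    intro h
    have : (2 : Fin 3) = 1 := hA.injective (show ![A₁,A₂,A₃] 2 = ![A₁,A₂,A₃] 1 from h)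
    exact absurd this (by decide)
  have hA31 : A₃ ≠ A₁ := by
    intro h
    have : (2 : Fin 3) = 0 := hA.injective (show ![A₁,A₂,A₃] 2 = ![A₁,A₂,A₃] 0 from h)
    exact absurd this (by decide)
  have hL1pos : 0 < ‖A₃ - A₂‖ := norm_pos_iff.2 (sub_ne_zero.2 hA32)
  have hL2pos : 0 < ‖A₃ - A₁‖ := norm_pos_iff.2 (sub_ne_zero.2 hA31)
  have hF1 : ‖A₃ - D‖ = (1-d) * ‖A₃ - A₂‖ := by
    have h : A₃ - D = (1-d) • (A₃ - A₂) := by rw [← hDdef]; module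
    rw [h, norm_smul, Real.norm_eq_abs, abs_of_pos (by linarith)]
  have hF2 : ‖A₃ - E‖ = (1-e) * ‖A₃ - A₁‖ := by
    have h : A₃ - E = (1-e) • (A₃ - A₁) := by rw [← hEdef]; module
    rw [h, norm_smul, Real.norm_eq_abs, abs_of_pos (by linarith)]
  have hDE : D - E = (1-d) • (A₂ - A₁) + (d-e) • (A₃ - A₁) := by
    rw [← hDdef, ← hEdef]; module
  have hDE' : D - E = (1-e) • (A₂ - A₁) + (d-e) • (A₃ - A₂) := by
    rw [← hDdef, ← hEdef]; module
  obtain ⟨c, hc⟩ := htpar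
  have htt : ⟪t, t⟫ = 1 := by rw [real_inner_self_eq_norm_sq, ht]; norm_num
  have hP1pos : 0 < ⟪A₂ - A₁, n₁⟫ := by
    rw [hcomm, show A₂ - A₁ = -(A₁ - A₂) by abel, inner_neg_right]
    linarith
  have hP2neg : ⟪A₂ - A₁, n₂⟫ < 0 := by rw [hcomm]; exact hn₂o
  have hzero1 : ⟪A₃ - A₂, n₁⟫ = 0 := by rw [hcomm]; exact hn₁e
  have hzero2 : ⟪A₃ - A₁, n₂⟫ = 0 := by rw [hcomm]; exact hn₂e
  have hcn1 : c * ⟪t, n₁⟫ = (1-e) * ⟪A₂ - A₁, n₁⟫ := by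
    have h1 : ⟪D - E, n₁⟫ = (1-e) * ⟪A₂ - A₁, n₁⟫ := by
      rw [hDE', inner_add_left, real_inner_smul_left, real_inner_smul_left, hzero1]
      ring
    rw [← h1, hc, real_inner_smul_left]
  have hcn2 : c * ⟪t, n₂⟫ = (1-d) * ⟪A₂ - A₁, n₂⟫ := by
    have h1 : ⟪D - E, n₂⟫ = (1-d) * ⟪A₂ - A₁, n₂⟫ := by
      rw [hDE, inner_add_left, real_inner_smul_left, real_inner_smul_left, hzero2]
      ring
    rw [← h1, hc, real_inner_smul_left]
  have hsub32 : A₃ - A₂ = (A₃ - A₁) - (A₂ - A₁) := by abel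
  have hkey1 : ⟪A₂ - A₁, n₁⟫^2 * ‖A₃ - A₂‖^2 =
      ((A₂-A₁) 0 * (A₃-A₁) 1 - (A₂-A₁) 1 * (A₃-A₁) 0)^2 := by
    have h := perp_key n₁ (A₃ - A₂) (A₂ - A₁) hn₁e hn₁
    have c0 : (A₃ - A₂) 0 = (A₃ - A₁) 0 - (A₂ - A₁) 0 := by rw [hsub32]; rfl
    have c1 : (A₃ - A₂) 1 = (A₃ - A₁) 1 - (A₂ - A₁) 1 := by rw [hsub32]; rfl
    rw [c0, c1] at h
    linear_combination h
  have hkey2 : ⟪A₂ - A₁, n₂⟫^2 * ‖A₃ - A₁‖^2 =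
      ((A₂-A₁) 0 * (A₃-A₁) 1 - (A₂-A₁) 1 * (A₃-A₁) 0)^2 :=
    perp_key n₂ (A₃ - A₁) (A₂ - A₁) hn₂e hn₂
  have hlb := area_lb A₁ A₂ A₃
  have hc0 : c ≠ 0 := by
    intro h
    rw [h, zero_smul] at hc
    have h1 : ⟪D - E, n₂⟫ = (1-d) * ⟪A₂ - A₁, n₂⟫ := by
      rw [hDE, inner_add_left, real_inner_smul_left, real_inner_smul_left, hzero2]
      ring
    rw [hc, inner_zero_left] at h1
    have h2 : ⟪A₂ - A₁, n₂⟫ = 0 := by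
      rcases mul_eq_zero.1 h1.symm with h' | h'
      · linarith
      · exact h'
    linarith
  -- scalar products with t
  have hpt : c * ⟪A₂ - A₁, t⟫ = (1-d)*‖A₂ - A₁‖^2 + (d-e)*⟪A₂ - A₁, A₃ - A₁⟫ := by
    have h1 : ⟪A₂ - A₁, D - E⟫ = (1-d)*‖A₂ - A₁‖^2 + (d-e)*⟪A₂ - A₁, A₃ - A₁⟫ := by
      rw [hDE, inner_add_right, real_inner_smul_right, real_inner_smul_right,
        real_inner_self_eq_norm_sq]
    rw [← h1, hc, real_inner_smul_right]
  have hc2 : c^2 = (1-d)^2*‖A₂ - A₁‖^2 + 2*(1-d)*(d-e)*⟪A₂ - A₁, A₃ - A₁⟫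
      + (d-e)^2*‖A₃ - A₁‖^2 := by
    have h1 : c^2 = ⟪D - E, D - E⟫ := by
      rw [hc, real_inner_smul_left, real_inner_smul_right, htt]; ring
    rw [h1]
    nth_rewrite 1 [hDE]
    nth_rewrite 1 [hDE]
    simp only [inner_add_left, inner_add_right, real_inner_smul_left, real_inner_smul_right]
    rw [real_inner_self_eq_norm_sq, real_inner_self_eq_norm_sq,
      hcomm (A₃ - A₁) (A₂ - A₁)]
    ring
  -- angle conditions
  have hb0 : 0 ≤ ⟪A₂ - A₁, A₃ - A₁⟫ := angle_inner A₁ A₂ A₃ hang1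
  have hba : ⟪A₂ - A₁, A₃ - A₁⟫ ≤ ‖A₂ - A₁‖^2 := by
    have h := angle_inner A₂ A₁ A₃ hang2
    rw [show A₁ - A₂ = -(A₂ - A₁) by abel, show A₃ - A₂ = (A₃ - A₁) - (A₂ - A₁) by abel,
      inner_neg_left, inner_sub_right, real_inner_self_eq_norm_sq] at h
    linarith
  have hbc : ⟪A₂ - A₁, A₃ - A₁⟫ ≤ ‖A₃ - A₁‖^2 := by
    have h := angle_inner A₃ A₁ A₂ hang3
    rw [show A₁ - A₃ = -(A₃ - A₁) by abel, show A₂ - A₃ = (A₂ - A₁) - (A₃ - A₁) by abel,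
      inner_neg_left, inner_sub_right, real_inner_self_eq_norm_sq,
      hcomm (A₃ - A₁) (A₂ - A₁)] at h
    linarith
  intro x _
  have hXc : c * (⟪x - A₁, t⟫ - ⟪x - A₂, t⟫) =
      (1-d)*‖A₂ - A₁‖^2 + (d-e)*⟪A₂ - A₁, A₃ - A₁⟫ := by
    rw [← inner_sub_left, show x - A₁ - (x - A₂) = A₂ - A₁ by abel]
    exact hpt
  have hf : ⟪piOmega A₁ A₂ A₃ D E t n₁ n₂ x, t⟫ =
      ((1-d) * ⟪t, n₁⟫) * (‖A₃ - A₂‖ * ⟪x - A₁, t⟫) / (2 * triArea A₁ A₂ A₃)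
      + ((1-e) * ⟪t, n₂⟫) * (‖A₃ - A₁‖ * ⟪x - A₂, t⟫) / (2 * triArea A₁ A₂ A₃) := by
    simp only [piOmega, lam1, lam2, inner_add_left, real_inner_smul_left, hF1, hF2]
    field_simp
  rw [hf]
  exact bounds_of d e (‖A₃ - A₂‖) (‖A₃ - A₁‖) (⟪A₂ - A₁, n₁⟫) (⟪A₂ - A₁, n₂⟫)
    (⟪t, n₁⟫) (⟪t, n₂⟫) (⟪x - A₁, t⟫) (⟪x - A₂, t⟫)
    (‖A₂ - A₁‖^2) (⟪A₂ - A₁, A₃ - A₁⟫) (‖A₃ - A₁‖^2) (triArea A₁ A₂ A₃) c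
    ((A₂-A₁) 0 * (A₃-A₁) 1 - (A₂-A₁) 1 * (A₃-A₁) 0)
    hd0 hd1 he0 he1 hb0 hba hbc hL1pos hL2pos hP1pos hP2neg hkey1 hkey2 hlb
    hcn1 hcn2 hXc hc2 hc0
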